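/- (q-binomial transform fixed point) Let n ≥ 1 and let f_0(q), …, f_{n-1}(q) ∈ ℤ[q]. Define the q-dual sequence by f̂_k(q) = Σ_{j=0}^{k} (-1)^j q^{binom(j+1,2)} qbinom(k, j) f_j(q). Then for every integer a with 0 ≤ a ≤ n-1, Σ_{k=0}^{a} q^{k²+k} qbinom(a, k) qbinom(-1-a, k) f̂_k(q) = (-1)^a q^{binom(a+1,2)} Σ_{j=0}^{a} q^{j²+j} qbinom(a, j) qbinom(-1-a, j) f_j(q), as an identity in ℤ[q, q^{-1}]. -/

import Mathlib

open Polynomial Finset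

/-- The variable `q` as a rational function over `ℚ`. -/
noncomputable def qv : RatFunc ℚ := RatFunc.X

/-- The q-Pochhammer symbol `(x; t)_k = (1-x)(1-xt)⋯(1-xt^{k-1})`. -/
noncomputable def qPochAt (x t : RatFunc ℚ) (k : ℕ) : RatFunc ℚ :=
  ∏ i ∈ Finset.range k, (1 - x * t ^ i)

/-- The Gaussian binomial coefficient `[α choose k]_t = (t^{α-k+1}; t)_k / (t; t)_k`
with integer upper argument. -/
noncomputable def qbinomAt (t : RatFunc ℚ) (α : ℤ) (k : ℕ) : RatFunc ℚ :=
  (∏ i ∈ Finset.range k, (1 - t ^ (α - k + 1 + i))) /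
    (∏ i ∈ Finset.range k, (1 - t ^ (i + 1)))

/-- The Gaussian binomial coefficient in the variable `q`. -/
noncomputable def qbinom (α : ℤ) (k : ℕ) : RatFunc ℚ := qbinomAt qv α k

/-- The image of an integer polynomial in `RatFunc ℚ`. -/
noncomputable def toF (g : Polynomial ℤ) : RatFunc ℚ :=
  Polynomial.aeval (RatFunc.X : RatFunc ℚ) g

/-- `A ≡ B (mod Φ_n(q)^m)` in the localization of `ℤ[q]` at polynomials coprime
to `Φ_n`: there are `f g : ℤ[q]` with `Φ_n ∤ g` and `(A - B) * g = Φ_n^m * f`. -/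
def modCong (n m : ℕ) (A B : RatFunc ℚ) : Prop :=
  ∃ f g : Polynomial ℤ, ¬ (Polynomial.cyclotomic n ℤ ∣ g) ∧
    (A - B) * toF g = toF ((Polynomial.cyclotomic n ℤ) ^ m * f)

/-- The q-integer `[m]_q = (1-q^m)/(1-q)`. -/
noncomputable def qint (m : ℤ) : RatFunc ℚ := (1 - qv ^ m) / (1 - qv)

/-- The q-dual `f̂_k(q) = Σ_{j=0}^k (-1)^j q^{binom(j+1,2)} [k choose j]_q f_j(q)`. -/
noncomputable def qdual (f : ℕ → Polynomial ℤ) (k : ℕ) : RatFunc ℚ :=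
  ∑ j ∈ Finset.range (k + 1),
    (-1 : RatFunc ℚ) ^ j * qv ^ (j * (j + 1) / 2) * qbinom k j * toF (f j)

/-- q-binomial transform fixed point: for `0 ≤ a ≤ n-1`,
`Σ_k q^{k²+k}[a,k][-1-a,k] f̂_k = (-1)^a q^{binom(a+1,2)} Σ_j q^{j²+j}[a,j][-1-a,j] f_j`. -/
lemma qv_ne_zero : qv ≠ 0 := RatFunc.X_ne_zero

lemma qv_pow_ne_one (n : ℕ) (hn : n ≠ 0) : qv ^ n ≠ 1 := by
  intro h
  have : (Polynomial.X : ℚ[X]) ^ n = 1 := by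
    apply RatFunc.algebraMap_injective ℚ ?_
    · simpa [qv, RatFunc.algebraMap_X, map_pow, map_one] using h
  have := congrArg Polynomial.natDegree this
  simp [Polynomial.natDegree_X_pow] at this
  exact hn this

lemma qv_zpow_ne_one (m : ℤ) (hm : m ≠ 0) : qv ^ m ≠ 1 := by
  rcases lt_trichotomy m 0 with h | h | h
  · intro he
    have h2 : qv ^ (-m) = 1 := by
      have := congrArg (·⁻¹) he
      simpa [← zpow_neg] using this
    have : qv ^ ((-m).toNat) = 1 := by
      rw [← zpow_natCast, Int.toNat_of_nonneg (by omega)]; exact h2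
    exact qv_pow_ne_one _ (by omega) this
  · exact absurd h hm
  · intro he
    have : qv ^ (m.toNat) = 1 := by
      rw [← zpow_natCast, Int.toNat_of_nonneg (by omega)] at *; exact he
    exact qv_pow_ne_one _ (by omega) this

lemma one_sub_qv_zpow_ne (m : ℤ) (hm : m ≠ 0) : 1 - qv ^ m ≠ 0 := by
  intro h
  exact qv_zpow_ne_one m hm (by linear_combination -h)

noncomputable def Dq (k : ℕ) : RatFunc ℚ := ∏ i ∈ Finset.range k, (1 - qv ^ (i + 1))

noncomputable def Nq (α : ℤ) (k : ℕ) : RatFunc ℚ :=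
  ∏ i ∈ Finset.range k, (1 - qv ^ (α - k + 1 + i))

lemma qbinom_eq (α : ℤ) (k : ℕ) : qbinom α k = Nq α k / Dq k := rfl

lemma one_sub_qv_pow_ne (m : ℕ) (hm : m ≠ 0) : 1 - qv ^ m ≠ 0 := by
  have := one_sub_qv_zpow_ne m (by exact_mod_cast hm)
  rwa [zpow_natCast] at this

lemma Dq_ne_zero (k : ℕ) : Dq k ≠ 0 := by
  apply Finset.prod_ne_zero_iff.2
  intro i _
  exact one_sub_qv_pow_ne (i+1) (by omega)

lemma Dq_succ (k : ℕ) : Dq (k+1) = Dq k * (1 - qv ^ (k+1)) := Finset.prod_range_succ _ _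

lemma qbinom_zero (α : ℤ) : qbinom α 0 = 1 := by simp [qbinom, qbinomAt]

lemma Nq_mul (a k : ℕ) (h : k ≤ a) : Nq a k * Dq (a - k) = Dq a := by
  obtain ⟨b, rfl⟩ : ∃ b, a = b + k := ⟨a - k, by omega⟩
  have hb : b + k - k = b := by omega
  rw [hb]
  simp only [Dq, Nq]
  rw [Finset.prod_range_add, mul_comm]
  congr 1
  apply Finset.prod_congr rfl
  intro i _
  congr 1
  rw [← zpow_natCast qv (b + i + 1)]
  congr 1
  push_cast
  ring

lemma qbinom_nat (a k : ℕ) (h : k ≤ a) : qbinom a k = Dq a / (Dq k * Dq (a - k)) := by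
  rw [qbinom_eq, div_eq_div_iff (Dq_ne_zero k) (mul_ne_zero (Dq_ne_zero k) (Dq_ne_zero (a-k)))]
  have h1 := Nq_mul a k h
  linear_combination Dq k * h1

lemma qbinom_nat_zero (a k : ℕ) (h : a < k) : qbinom a k = 0 := by
  rw [qbinom_eq, Nq]
  rw [Finset.prod_eq_zero (i := k - 1 - a) (Finset.mem_range.2 (by omega))]
  · simp
  · have : (a : ℤ) - k + 1 + (k - 1 - a : ℕ) = 0 := by push_cast [Nat.cast_sub]; omega
    rw [this]; simp

lemma qbinom_symm (a k : ℕ) (h : k ≤ a) : qbinom a (a - k) = qbinom a k := by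
  rw [qbinom_nat a (a-k) (by omega), qbinom_nat a k h]
  have : a - (a - k) = k := by omega
  rw [this, mul_comm]

lemma qbinom_pascal (α : ℤ) (k : ℕ) :
    qbinom α (k+1) = qbinom (α-1) (k+1) + qv ^ (α - 1 - k) * qbinom (α-1) k := by
  set M : RatFunc ℚ := ∏ i ∈ Finset.range k, (1 - qv ^ (α - k + i)) with hM
  have h1 : Nq α (k+1) = M * (1 - qv ^ α) := by
    rw [Nq, Finset.prod_range_succ]
    congr 1
    · apply Finset.prod_congr rfl; intro i _; congr 2; push_cast; ring
    · congr 2; push_cast; ring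
  have h2 : Nq (α-1) (k+1) = M * (1 - qv ^ (α - 1 - k)) := by
    rw [Nq, Finset.prod_range_succ']
    congr 1
    · apply Finset.prod_congr rfl; intro i _; congr 2; push_cast; ring
    · congr 2; push_cast; ring
  have h3 : Nq (α-1) k = M := by
    rw [Nq]; apply Finset.prod_congr rfl; intro i _; congr 2; push_cast; ring
  rw [qbinom_eq, qbinom_eq, qbinom_eq, h1, h2, h3, Dq_succ]
  have hk : (Dq k) ≠ 0 := Dq_ne_zero k
  have hk1 : (1 - qv ^ (k+1)) ≠ 0 := one_sub_qv_pow_ne (k+1) (by omega)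
  have e1 : qv ^ (α - 1 - k) * qv ^ (k+1 : ℕ) = qv ^ α := by
    rw [← zpow_natCast qv (k+1), ← zpow_add₀ qv_ne_zero]
    congr 1; push_cast; ring
  field_simp
  linear_combination M * e1

def T (k : ℕ) : ℕ := k * (k+1) / 2

lemma two_T (k : ℕ) : 2 * (T k : ℤ) = k * (k+1) := by
  have h : T k * 2 = k * (k+1) := Nat.div_mul_cancel (Nat.even_mul_succ_self k).two_dvd
  zify at h; linarith

lemma gauss (k : ℕ) : 2 * ∑ i ∈ Finset.range k, (i : ℤ) = k * (k - 1) := by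
  induction k with
  | zero => simp
  | succ n ih =>
    rw [Finset.sum_range_succ]
    push_cast
    push_cast at ih
    linear_combination ih

lemma sum_exp (α : ℤ) (k : ℕ) : ∑ i ∈ Finset.range k, (α + k - i) = α * k + T k := by
  have hsplit : ∑ i ∈ Finset.range k, (α + (k:ℤ) - i)
      = k * (α + k) - ∑ i ∈ Finset.range k, (i:ℤ) := by
    rw [Finset.sum_sub_distrib, Finset.sum_const, Finset.card_range, nsmul_eq_mul]
  rw [hsplit]
  have h1 := gauss k
  have h2 := two_T k
  have key : 2 * ((k:ℤ) * (α + k) - ∑ i ∈ Finset.range k, (i:ℤ)) = 2 * (α * k + T k) := by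
    linear_combination (-1 : ℤ) * h1 - h2
  linarith

lemma qv_zpow_prod (e : ℕ → ℤ) (k : ℕ) :
    ∏ i ∈ Finset.range k, qv ^ (e i) = qv ^ (∑ i ∈ Finset.range k, e i) := by
  induction k with
  | zero => simp
  | succ n ih => rw [Finset.prod_range_succ, Finset.sum_range_succ, ih, zpow_add₀ qv_ne_zero]

lemma qbinom_neg (α : ℤ) (k : ℕ) :
    qbinom (-1-α) k = (-1)^k * qv ^ (-(α*k) - (T k : ℤ)) * qbinom (α+k) k := by
  have hnum : Nq (-1-α) k = ((-1 : RatFunc ℚ)^k * qv ^ (-(α*k) - (T k:ℤ))) * Nq (α+k) k := by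
    rw [Nq]
    have hfac : ∀ i ∈ Finset.range k,
        (1 - qv ^ ((-1-α) - (k:ℤ) + 1 + i)) = ((-1) * qv ^ (-(α + k - i))) * (1 - qv ^ (α + k - i)) := by
      intro i _
      have hs : qv ^ (-(α + (k:ℤ) - i)) * qv ^ (α + (k:ℤ) - i) = 1 := by
        rw [← zpow_add₀ qv_ne_zero]; simp
      have he : (-1-α) - (k:ℤ) + 1 + i = -(α + k - i) := by ring
      rw [he]
      linear_combination -hs
    rw [Finset.prod_congr rfl hfac, Finset.prod_mul_distrib]
    congr 1
    · rw [Finset.prod_mul_distrib, Finset.prod_const, Finset.card_range, qv_zpow_prod]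
      congr 1
      have : ∑ i ∈ Finset.range k, (-(α + (k:ℤ) - i)) = -∑ i ∈ Finset.range k, (α + (k:ℤ) - i) := by
        rw [← Finset.sum_neg_distrib]
      rw [this, sum_exp]
      ring
    · rw [Nq, ← Finset.prod_range_reflect]
      apply Finset.prod_congr rfl
      intro i hi
      congr 1
      simp only [Finset.mem_range] at hi
      have : ((k - 1 - i : ℕ) : ℤ) = (k:ℤ) - 1 - i := by push_cast [Nat.cast_sub]; omega
      rw [this]; ring
  rw [qbinom_eq, qbinom_eq, hnum, mul_div_assoc]

lemma pascal_nat (b k : ℕ) :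
    qbinom (b+1 : ℕ) (k+1) = qbinom b (k+1) + qv ^ ((b:ℤ) - k) * qbinom b k := by
  have h := qbinom_pascal ((b:ℤ)+1) k
  have e1 : ((b:ℤ)+1) - 1 = b := by ring
  rw [e1] at h
  have e3 : ((b+1 : ℕ) : ℤ) = (b:ℤ)+1 := by push_cast; ring
  rw [e3]
  exact h

lemma vandermonde (y : ℤ) (b : ℕ) : ∀ p : ℕ,
    ∑ m ∈ Finset.range (p+1), qbinom b m * qbinom y (p - m) * qv ^ ((m:ℤ) * (y - p + m))
      = qbinom (b + y) p := by
  induction b with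
  | zero =>
    intro p
    rw [Finset.sum_eq_single 0]
    · simp [qbinom_zero]
    · intro m hm hm0
      rw [qbinom_nat_zero 0 m (Nat.pos_of_ne_zero hm0)]
      ring
    · simp
  | succ b ih =>
    intro p
    cases p with
    | zero =>
      simp [qbinom_zero]
    | succ p =>
      rw [Finset.sum_range_succ']
      have key : ∀ m ∈ Finset.range (p+1),
          qbinom (↑(b+1)) (m+1) * qbinom y (p+1 - (m+1)) * qv ^ ((↑(m+1):ℤ) * (y - ↑(p+1) + ↑(m+1)))
          = qbinom (↑b) (m+1) * qbinom y (p+1 - (m+1)) * qv ^ ((↑(m+1):ℤ) * (y - ↑(p+1) + ↑(m+1)))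
            + qv ^ ((b:ℤ) + y - p) * (qbinom ↑b m * qbinom y (p - m) * qv ^ ((m:ℤ) * (y - ↑p + ↑m))) := by
        intro m hm
        simp only [Finset.mem_range] at hm
        rw [pascal_nat b m]
        have hsub : p + 1 - (m+1) = p - m := by omega
        rw [hsub]
        have hq : qv ^ ((b:ℤ) - m) * qv ^ ((↑(m+1):ℤ) * (y - ↑(p+1) + ↑(m+1)))
            = qv ^ ((b:ℤ) + y - p) * qv ^ ((m:ℤ)*(y - (p:ℤ) + m)) := by
          rw [← zpow_add₀ qv_ne_zero, ← zpow_add₀ qv_ne_zero]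
          congr 1; push_cast; ring
        linear_combination qbinom ↑b m * qbinom y (p-m) * hq
      rw [Finset.sum_congr rfl key, Finset.sum_add_distrib, ← Finset.mul_sum, ih p]
      have hA : (∑ m ∈ Finset.range (p+1),
            qbinom (↑b) (m+1) * qbinom y (p+1 - (m+1)) * qv ^ ((↑(m+1):ℤ) * (y - ↑(p+1) + ↑(m+1))))
          + qbinom (↑(b+1)) 0 * qbinom y (p+1 - 0) * qv ^ ((↑(0:ℕ):ℤ) * (y - ↑(p+1) + ↑(0:ℕ)))
          = qbinom (↑b + y) (p+1) := by
        rw [← ih (p+1)]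
        conv_rhs => rw [Finset.sum_range_succ']
        simp [qbinom_zero]
      have hp := qbinom_pascal ((b:ℤ) + 1 + y) p
      have e1 : ((b:ℤ)+1+y) - 1 = (b:ℤ) + y := by ring
      rw [e1] at hp
      have e3 : ((b+1:ℕ):ℤ) + y = (b:ℤ) + 1 + y := by push_cast; ring
      rw [e3, hp]
      linear_combination hA

lemma qbinom_trinomial (a k j : ℕ) (hj : j ≤ k) (hk : k ≤ a) :
    qbinom a k * qbinom k j = qbinom a j * qbinom (a - j : ℕ) (k - j) := by
  rw [qbinom_nat a k hk, qbinom_nat k j hj, qbinom_nat a j (le_trans hj hk),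
    qbinom_nat (a-j) (k-j) (by omega)]
  have h1 : a - j - (k - j) = a - k := by omega
  rw [h1]
  have := Dq_ne_zero a; have := Dq_ne_zero k; have := Dq_ne_zero j
  have := Dq_ne_zero (a-k); have := Dq_ne_zero (k-j); have := Dq_ne_zero (a-j)
  field_simp

lemma key (a j : ℕ) (hj : j ≤ a) :
    ∑ k ∈ Finset.range (a+1), qv ^ (k^2 + k) * qbinom a k * qbinom (-1 - (a:ℤ)) k * qbinom k j
      = (-1 : RatFunc ℚ)^(a-j) * qv ^ (T a + T j) * (qbinom a j * qbinom (-1 - (a:ℤ)) j) := by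
  obtain ⟨b, rfl⟩ : ∃ b, a = j + b := ⟨a - j, by omega⟩
  -- Step 1: drop vanishing initial terms and reindex k = j + m
  have hsplit : ∑ k ∈ Finset.range (j + b + 1),
        qv ^ (k^2 + k) * qbinom (j+b : ℕ) k * qbinom (-1 - ((j+b:ℕ):ℤ)) k * qbinom k j
      = ∑ m ∈ Finset.range (b+1),
        qv ^ ((j+m)^2 + (j+m)) * qbinom (j+b : ℕ) (j+m) * qbinom (-1 - ((j+b:ℕ):ℤ)) (j+m)
          * qbinom (j+m : ℕ) j := by
    have : j + b + 1 = j + (b + 1) := by omega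
    rw [this, Finset.sum_range_add]
    have hz : ∑ k ∈ Finset.range j,
        qv ^ (k^2 + k) * qbinom (j+b : ℕ) k * qbinom (-1 - ((j+b:ℕ):ℤ)) k * qbinom k j = 0 := by
      apply Finset.sum_eq_zero
      intro k hk
      simp only [Finset.mem_range] at hk
      rw [qbinom_nat_zero k j hk]
      ring
    rw [hz, zero_add]
  rw [hsplit]
  -- Step 2: trinomial revision
  have htri : ∀ m ∈ Finset.range (b+1),
      qv ^ ((j+m)^2 + (j+m)) * qbinom (j+b : ℕ) (j+m) * qbinom (-1 - ((j+b:ℕ):ℤ)) (j+m)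
          * qbinom (j+m : ℕ) j
      = qbinom (j+b : ℕ) j *
        (qbinom b m * qbinom (-1 - ((j+b:ℕ):ℤ)) (j+m) * qv ^ ((j+m)^2 + (j+m))) := by
    intro m hm
    simp only [Finset.mem_range] at hm
    have h := qbinom_trinomial (j+b) (j+m) j (by omega) (by omega)
    have e1 : j + b - j = b := by omega
    have e2 : j + m - j = m := by omega
    rw [e1, e2] at h
    linear_combination qv ^ ((j+m)^2 + (j+m)) * qbinom (-1 - ((j+b:ℕ):ℤ)) (j+m) * h
  rw [Finset.sum_congr rfl htri, ← Finset.mul_sum]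
  set y : ℤ := -1 - ((j+b:ℕ):ℤ) with hy
  -- Step 3: compare with reflected Vandermonde sum
  have hvdm := vandermonde y b (b + j)
  have hrestrict : ∑ m ∈ Finset.range (b+j+1), qbinom b m * qbinom y (b+j - m) * qv ^ ((m:ℤ) * (y - (b+j:ℕ) + m))
      = ∑ m ∈ Finset.range (b+1), qbinom b m * qbinom y (b+j - m) * qv ^ ((m:ℤ) * (y - (b+j:ℕ) + m)) := by
    symm
    apply Finset.sum_subset (Finset.range_subset_range.2 (by omega))
    intro m _ hm
    simp only [Finset.mem_range] at hm
    rw [qbinom_nat_zero b m (by omega)]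
    ring
  have hreflect : ∑ m ∈ Finset.range (b+1), qbinom b m * qbinom y (b+j - m) * qv ^ ((m:ℤ) * (y - (b+j:ℕ) + m))
      = ∑ m ∈ Finset.range (b+1), qbinom b (b - m) * qbinom y (b+j - (b-m)) * qv ^ (((b-m : ℕ):ℤ) * (y - (b+j:ℕ) + ((b-m:ℕ):ℤ))) := by
    rw [← Finset.sum_range_reflect]
    apply Finset.sum_congr rfl
    intro m hm
    have : b + 1 - 1 - m = b - m := by omega
    rw [this]
  -- Step 4: pointwise match
  have hpt : ∀ m ∈ Finset.range (b+1),
      qbinom b m * qbinom y (j+m) * qv ^ ((j+m)^2 + (j+m))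
      = qv ^ (((b:ℤ)*b + b + 2*b*j + j*j + j : ℤ)) *
        (qbinom b (b - m) * qbinom y (b+j - (b-m)) * qv ^ (((b-m : ℕ):ℤ) * (y - (b+j:ℕ) + ((b-m:ℕ):ℤ)))) := by
    intro m hm
    simp only [Finset.mem_range] at hm
    have hm' : m ≤ b := by omega
    have e1 : b + j - (b - m) = j + m := by omega
    rw [e1, qbinom_symm b m hm']
    have hq : (qv : RatFunc ℚ) ^ ((j+m)^2 + (j+m))
        = qv ^ (((b:ℤ)*b + b + 2*b*j + j*j + j : ℤ)) * qv ^ (((b-m : ℕ):ℤ) * (y - (b+j:ℕ) + ((b-m:ℕ):ℤ))) := by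
      rw [← zpow_natCast qv ((j+m)^2 + (j+m)), ← zpow_add₀ qv_ne_zero]
      congr 1
      have hc : ((b - m : ℕ) : ℤ) = (b:ℤ) - m := by omega
      rw [hy, hc]
      push_cast
      ring
    rw [hq]
    ring
  rw [Finset.sum_congr rfl hpt, ← Finset.mul_sum, ← hreflect, ← hrestrict, hvdm]
  -- Step 5: evaluate qbinom (b + y) (b+j)
  have hby : (b:ℤ) + y = -1 - (j:ℤ) := by rw [hy]; push_cast; ring
  rw [hby]
  have hneg1 := qbinom_neg (j:ℤ) (b+j)
  have e4 : ((j:ℤ)) + ((b+j:ℕ):ℤ) = ((b+2*j : ℕ):ℤ) := by push_cast; ring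
  rw [e4] at hneg1
  have hsym : qbinom ((b+2*j : ℕ):ℤ) (b+j) = qbinom ((b+2*j:ℕ):ℤ) j := by
    have := qbinom_symm (b+2*j) (b+j) (by omega)
    have e5 : b + 2*j - (b+j) = j := by omega
    rw [e5] at this
    exact this.symm
  have hneg2 := qbinom_neg ((j+b:ℕ):ℤ) j
  have e6 : ((j+b:ℕ):ℤ) + (j:ℕ) = ((b+2*j : ℕ):ℤ) := by push_cast; ring
  rw [e6] at hneg2
  rw [hneg1, hsym, hneg2]
  -- Step 6: collect signs and powers
  have hb' : j + b - j = b := by omega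
  rw [hb']
  rw [show j + b = b + j from by omega]
  have hfin : qv ^ (((b:ℤ)*b + b + 2*b*j + j*j + j : ℤ)) * qv ^ (-((j:ℤ)*((b+j:ℕ):ℤ)) - (T (b+j) : ℤ))
      = qv ^ ((T (b+j) + T j : ℕ)) * qv ^ (-(((b+j:ℕ):ℤ)*((j:ℕ):ℤ)) - (T j : ℤ)) := by
    rw [← zpow_natCast qv (T (b+j) + T j), ← zpow_add₀ qv_ne_zero, ← zpow_add₀ qv_ne_zero]
    congr 1
    have h1 := two_T (b+j)
    push_cast
    push_cast at h1
    linear_combination -h1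
  have hpba : (-1 : RatFunc ℚ)^(b+j) = (-1)^b * (-1)^j := pow_add _ _ _
  rw [hpba]
  linear_combination ((-1 : RatFunc ℚ)^b * (-1)^j * qbinom ((b+j:ℕ):ℤ) j * qbinom ((b+2*j:ℕ):ℤ) j) * hfin


theorem stmt8 (n : ℕ) (hn : 1 ≤ n) (f : ℕ → Polynomial ℤ) (a : ℕ) (ha : a ≤ n - 1) :
    ∑ k ∈ Finset.range (a + 1),
        qv ^ (k ^ 2 + k) * qbinom a k * qbinom (-1 - (a : ℤ)) k * qdual f k =
      (-1 : RatFunc ℚ) ^ a * qv ^ (a * (a + 1) / 2) *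
        ∑ j ∈ Finset.range (a + 1),
          qv ^ (j ^ 2 + j) * qbinom a j * qbinom (-1 - (a : ℤ)) j * toF (f j) := by
  have hdual : ∀ k ∈ Finset.range (a+1),
      qv ^ (k^2+k) * qbinom a k * qbinom (-1 - (a:ℤ)) k * qdual f k
      = ∑ j ∈ Finset.range (a+1), ((-1:RatFunc ℚ)^j * qv ^ (j*(j+1)/2) * toF (f j)) *
          (qv ^ (k^2+k) * qbinom a k * qbinom (-1-(a:ℤ)) k * qbinom k j) := by
    intro k hk
    simp only [Finset.mem_range] at hk
    rw [qdual]
    rw [Finset.sum_subset (Finset.range_subset_range.2 (show k+1 ≤ a+1 by omega)) (fun j _ hj => by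
      simp only [Finset.mem_range] at hj
      rw [qbinom_nat_zero k j (by omega)]
      ring)]
    rw [Finset.mul_sum]
    apply Finset.sum_congr rfl
    intro j _
    ring
  rw [Finset.sum_congr rfl hdual, Finset.sum_comm]
  have hinner : ∀ j ∈ Finset.range (a+1),
      ∑ k ∈ Finset.range (a+1), ((-1:RatFunc ℚ)^j * qv ^ (j*(j+1)/2) * toF (f j)) *
          (qv ^ (k^2+k) * qbinom a k * qbinom (-1-(a:ℤ)) k * qbinom k j)
      = ((-1:RatFunc ℚ)^a * qv ^ (a*(a+1)/2)) *
          (qv ^ (j^2+j) * qbinom a j * qbinom (-1-(a:ℤ)) j * toF (f j)) := by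
    intro j hj
    simp only [Finset.mem_range] at hj
    rw [← Finset.mul_sum, key a j (by omega)]
    have hsgn : (-1:RatFunc ℚ)^j * (-1:RatFunc ℚ)^(a-j) = (-1)^a := by
      rw [← pow_add]; congr 1; omega
    have hqq : (qv : RatFunc ℚ) ^ (j*(j+1)/2) * qv ^ (T a + T j) = qv ^ (a*(a+1)/2) * qv ^ (j^2+j) := by
      rw [← pow_add, ← pow_add]
      congr 1
      have h : T j * 2 = j * (j+1) := Nat.div_mul_cancel (Nat.even_mul_succ_self j).two_dvd
      have hjj : j^2 + j = j*(j+1) := by ring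
      show T j + (T a + T j) = T a + (j^2+j)
      rw [hjj]
      generalize j*(j+1) = u at h ⊢
      omega
    have hc : ((-1:RatFunc ℚ)^j * qv ^ (j*(j+1)/2)) * ((-1:RatFunc ℚ)^(a-j) * qv ^ (T a + T j))
        = (-1:RatFunc ℚ)^a * (qv ^ (a*(a+1)/2) * qv ^ (j^2+j)) := by
      rw [show ((-1:RatFunc ℚ)^j * qv ^ (j*(j+1)/2)) * ((-1:RatFunc ℚ)^(a-j) * qv ^ (T a + T j))
          = ((-1:RatFunc ℚ)^j * (-1:RatFunc ℚ)^(a-j)) * (qv ^ (j*(j+1)/2) * qv ^ (T a + T j)) from by ring,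
        hsgn, hqq]
    linear_combination (toF (f j) * (qbinom a j * qbinom (-1-(a:ℤ)) j)) * hc
  rw [Finset.sum_congr rfl hinner, ← Finset.mul_sum]
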